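/- Let d ≥ 1, n ≥ 1, let μ be a positive measure on ℝ^d, and let p_{n-1}, p_n, p_{n+1}, p_{n+2} be families of μ-square-integrable functions ℝ^d → ℝ of sizes r_{n-1}, r_n, r_{n+1}, r_{n+2} respectively that are jointly orthonormal, i.e. ∫ p_m(x) p_k(x)^T dμ(x) = δ_{m,k} I for all m,k ∈ {n-1,n,n+1,n+2}. Suppose for both coordinates i and j (i,j ∈ {1,…,d}) the pointwise three-term relations hold at degrees n and n+1: x_l p_n(x) = B_{n+1,l} p_{n+1}(x) + A_{n+1,l} p_n(x) + B_{n,l}^T p_{n-1}(x) and x_l p_{n+1}(x) = B_{n+2,l} p_{n+2}(x) + A_{n+2,l} p_{n+1}(x) + B_{n+1,l}^T p_n(x) for l ∈ {i,j}, with matrices of compatible sizes, and assume all products of the form x_i x_j p_{m,a} p_{k,b} and x_l p_{m,a} p_{k,b} appearing are μ-integrable. Then the first commuting condition holds: B_{n+1,i} B_{n+1,j}^T + A_{n+1,i} A_{n+1,j} + B_{n,i}^T B_{n,j} = B_{n+1,j} B_{n+1,i}^T + A_{n+1,j} A_{n+1,i} + B_{n,j}^T B_{n,i}. -/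

import Mathlib

open MeasureTheory Matrix


section Aux
variable {α : Type*} [MeasurableSpace α] {μ : Measure α}

lemma memLp_mul_integrable {f g : α → ℝ} (hf : MemLp f 2 μ) (hg : MemLp g 2 μ) :
    Integrable (fun x => f x * g x) μ := by
  have : MemLp (f • g) 1 μ :=
    hg.smul hf
  simpa [Pi.smul_apply, smul_eq_mul, Pi.mul_def] using memLp_one_iff_integrable.mp this

lemma integral_sum_mul_sum {ι κ : Type*} [Fintype ι] [Fintype κ]
    (f : ι → α → ℝ) (g : κ → α → ℝ) (a : ι → ℝ) (b : κ → ℝ)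
    (hint : ∀ u v, Integrable (fun x => f u x * g v x) μ) :
    ∫ x, (∑ u, a u * f u x) * (∑ v, b v * g v x) ∂μ =
      ∑ u, ∑ v, a u * b v * ∫ x, f u x * g v x ∂μ := by
  have h1 : ∀ x, (∑ u, a u * f u x) * (∑ v, b v * g v x) =
      ∑ u, ∑ v, a u * b v * (f u x * g v x) := by
    intro x
    rw [Finset.sum_mul_sum]
    exact Finset.sum_congr rfl fun u _ => Finset.sum_congr rfl fun v _ => by ring
  simp_rw [h1]
  rw [integral_finset_sum _ fun u _ => integrable_finset_sum _ fun v _ =>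
    ((hint u v).const_mul _)]
  refine Finset.sum_congr rfl fun u _ => ?_
  rw [integral_finset_sum _ fun v _ => ((hint u v).const_mul _)]
  exact Finset.sum_congr rfl fun v _ => (integral_const_mul _ _)

lemma integral_sum_mul {ι : Type*} [Fintype ι]
    (f : ι → α → ℝ) (g : α → ℝ) (a : ι → ℝ)
    (hint : ∀ u, Integrable (fun x => f u x * g x) μ) :
    ∫ x, (∑ u, a u * f u x) * g x ∂μ = ∑ u, a u * ∫ x, f u x * g x ∂μ := by
  have h1 : ∀ x, (∑ u, a u * f u x) * g x = ∑ u, a u * (f u x * g x) := by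
    intro x; rw [Finset.sum_mul]; exact Finset.sum_congr rfl fun u _ => by ring
  simp_rw [h1]
  rw [integral_finset_sum _ fun u _ => ((hint u).const_mul _)]
  exact Finset.sum_congr rfl fun u _ => integral_const_mul _ _

end Aux

/-- `f` is an orthonormal family in `L²(μ)`. -/
def OrthoSelf {d r : ℕ} (μ : Measure (Fin d → ℝ)) (f : Fin r → (Fin d → ℝ) → ℝ) : Prop :=
  ∀ a b, ∫ x, f a x * f b x ∂μ = if a = b then (1 : ℝ) else 0

/-- The families `f` and `g` are mutually orthogonal in `L²(μ)`. -/
def OrthoCross {d r s : ℕ} (μ : Measure (Fin d → ℝ)) (f : Fin r → (Fin d → ℝ) → ℝ)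
    (g : Fin s → (Fin d → ℝ) → ℝ) : Prop :=
  ∀ a b, ∫ x, f a x * g b x ∂μ = 0

/-- All products of the form `x_i x_j f_a g_b`, `x_i f_a g_b`, `x_j f_a g_b`
are `μ`-integrable. -/
def ProdInt {d r s : ℕ} (μ : Measure (Fin d → ℝ)) (i j : Fin d)
    (f : Fin r → (Fin d → ℝ) → ℝ) (g : Fin s → (Fin d → ℝ) → ℝ) : Prop :=
  ∀ a b, Integrable (fun x => x i * x j * f a x * g b x) μ ∧
    Integrable (fun x => x i * f a x * g b x) μ ∧
    Integrable (fun x => x j * f a x * g b x) μ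

/-- the first commuting condition
`B_{n+1,i} B_{n+1,j}ᵀ + A_{n+1,i} A_{n+1,j} + B_{n,i}ᵀ B_{n,j} =
 B_{n+1,j} B_{n+1,i}ᵀ + A_{n+1,j} A_{n+1,i} + B_{n,j}ᵀ B_{n,i}` for the
recurrence matrices of a jointly orthonormal family satisfying the three-term relations. -/
theorem commuting_condition_one
    (d n : ℕ) (hd : 1 ≤ d) (hn : 1 ≤ n)
    (rnm1 rn rnp1 rnp2 : ℕ)
    (hrnm1 : 0 < rnm1) (hrn : 0 < rn) (hrnp1 : 0 < rnp1) (hrnp2 : 0 < rnp2)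
    (μ : Measure (Fin d → ℝ))
    (pnm1 : Fin rnm1 → (Fin d → ℝ) → ℝ)
    (pn : Fin rn → (Fin d → ℝ) → ℝ)
    (pnp1 : Fin rnp1 → (Fin d → ℝ) → ℝ)
    (pnp2 : Fin rnp2 → (Fin d → ℝ) → ℝ)
    (hL2nm1 : ∀ a, MemLp (pnm1 a) 2 μ)
    (hL2n : ∀ a, MemLp (pn a) 2 μ)
    (hL2np1 : ∀ a, MemLp (pnp1 a) 2 μ)
    (hL2np2 : ∀ a, MemLp (pnp2 a) 2 μ)
    (hON0 : OrthoSelf μ pnm1) (hON1 : OrthoSelf μ pn)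
    (hON2 : OrthoSelf μ pnp1) (hON3 : OrthoSelf μ pnp2)
    (hOC01 : OrthoCross μ pnm1 pn) (hOC02 : OrthoCross μ pnm1 pnp1)
    (hOC03 : OrthoCross μ pnm1 pnp2) (hOC12 : OrthoCross μ pn pnp1)
    (hOC13 : OrthoCross μ pn pnp2) (hOC23 : OrthoCross μ pnp1 pnp2)
    (i j : Fin d)
    (Bn : Fin d → Matrix (Fin rnm1) (Fin rn) ℝ)
    (Anp1 : Fin d → Matrix (Fin rn) (Fin rn) ℝ)
    (Bnp1 : Fin d → Matrix (Fin rn) (Fin rnp1) ℝ)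
    (Anp2 : Fin d → Matrix (Fin rnp1) (Fin rnp1) ℝ)
    (Bnp2 : Fin d → Matrix (Fin rnp1) (Fin rnp2) ℝ)
    (httrn : ∀ l ∈ ({i, j} : Set (Fin d)), ∀ (x : Fin d → ℝ) (k : Fin rn),
      x l * pn k x =
        (∑ q, Bnp1 l k q * pnp1 q x) + (∑ a, Anp1 l k a * pn a x) +
          (∑ a, Bn l a k * pnm1 a x))
    (httrnp1 : ∀ l ∈ ({i, j} : Set (Fin d)), ∀ (x : Fin d → ℝ) (k : Fin rnp1),
      x l * pnp1 k x =
        (∑ q, Bnp2 l k q * pnp2 q x) + (∑ a, Anp2 l k a * pnp1 a x) +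
          (∑ a, Bnp1 l a k * pn a x))
    (hint00 : ProdInt μ i j pnm1 pnm1) (hint01 : ProdInt μ i j pnm1 pn)
    (hint02 : ProdInt μ i j pnm1 pnp1) (hint03 : ProdInt μ i j pnm1 pnp2)
    (hint11 : ProdInt μ i j pn pn) (hint12 : ProdInt μ i j pn pnp1)
    (hint13 : ProdInt μ i j pn pnp2) (hint22 : ProdInt μ i j pnp1 pnp1)
    (hint23 : ProdInt μ i j pnp1 pnp2) (hint33 : ProdInt μ i j pnp2 pnp2) :
    Bnp1 i * (Bnp1 j)ᵀ + Anp1 i * Anp1 j + (Bn i)ᵀ * Bn j =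
      Bnp1 j * (Bnp1 i)ᵀ + Anp1 j * Anp1 i + (Bn j)ᵀ * Bn i := by
  classical
  set P : (Fin rnp1 ⊕ Fin rn ⊕ Fin rnm1) → (Fin d → ℝ) → ℝ :=
    Sum.elim pnp1 (Sum.elim pn pnm1) with hP
  set c : Fin d → Fin rn → (Fin rnp1 ⊕ Fin rn ⊕ Fin rnm1) → ℝ := fun l k =>
    Sum.elim (fun q => Bnp1 l k q) (Sum.elim (fun a => Anp1 l k a) (fun a => Bn l a k))
    with hc
  have hi : i ∈ ({i, j} : Set (Fin d)) := Set.mem_insert _ _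
  have hj : j ∈ ({i, j} : Set (Fin d)) := Set.mem_insert_of_mem _ rfl
  have hflip : ∀ {r s : ℕ} (f : Fin r → (Fin d → ℝ) → ℝ) (g : Fin s → (Fin d → ℝ) → ℝ)
      (a : Fin r) (b : Fin s),
      (∫ x, f a x * g b x ∂μ) = ∫ x, g b x * f a x ∂μ := fun f g a b =>
    integral_congr_ae (Filter.Eventually.of_forall fun x => mul_comm _ _)
  have hPL2 : ∀ u, MemLp (P u) 2 μ := by
    rintro (q | a | a)
    · exact hL2np1 q
    · exact hL2n a
    · exact hL2nm1 a
  have hPint : ∀ u v, Integrable (fun x => P u x * P v x) μ := fun u v =>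
    memLp_mul_integrable (hPL2 u) (hPL2 v)
  have hPon : ∀ u v, ∫ x, P u x * P v x ∂μ = if u = v then (1 : ℝ) else 0 := by
    rintro (q | a | a) (q' | a' | a')
    · simpa [hP] using hON2 q q'
    · simp only [hP, Sum.elim_inl, Sum.elim_inr]
      rw [if_neg (by simp), hflip pnp1 pn q a']
      exact hOC12 a' q
    · simp only [hP, Sum.elim_inl, Sum.elim_inr]
      rw [if_neg (by simp), hflip pnp1 pnm1 q a']
      exact hOC02 a' q
    · simp only [hP, Sum.elim_inl, Sum.elim_inr]
      rw [if_neg (by simp)]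
      exact hOC12 a q'
    · simpa [hP] using hON1 a a'
    · simp only [hP, Sum.elim_inl, Sum.elim_inr]
      rw [if_neg (by simp), hflip pn pnm1 a a']
      exact hOC01 a' a
    · simp only [hP, Sum.elim_inl, Sum.elim_inr]
      rw [if_neg (by simp)]
      exact hOC02 a q'
    · simp only [hP, Sum.elim_inl, Sum.elim_inr]
      rw [if_neg (by simp)]
      exact hOC01 a a'
    · simpa [hP] using hON0 a a'
  have hexp : ∀ l ∈ ({i, j} : Set (Fin d)), ∀ (x : Fin d → ℝ) (k : Fin rn),
      x l * pn k x = ∑ u, c l k u * P u x := by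
    intro l hl x k
    rw [httrn l hl x k]
    simp only [Fintype.sum_sum_type, hc, hP, Sum.elim_inl, Sum.elim_inr]
    ring
  have hcross : ∀ u (a : Fin rn), ∫ x, P u x * pn a x ∂μ =
      if u = Sum.inr (Sum.inl a) then (1 : ℝ) else 0 := by
    intro u a
    simpa [hP] using hPon u (Sum.inr (Sum.inl a))
  have hAval : ∀ l ∈ ({i, j} : Set (Fin d)), ∀ (k a : Fin rn),
      ∫ x, (x l * pn k x) * pn a x ∂μ = Anp1 l k a := by
    intro l hl k a
    calc ∫ x, (x l * pn k x) * pn a x ∂μ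
        = ∫ x, (∑ u, c l k u * P u x) * pn a x ∂μ := by
          refine integral_congr_ae (Filter.Eventually.of_forall fun x => ?_)
          dsimp only
          rw [hexp l hl x k]
      _ = ∑ u, c l k u * ∫ x, P u x * pn a x ∂μ :=
          integral_sum_mul P (pn a) (c l k)
            (fun u => memLp_mul_integrable (hPL2 u) (hL2n a))
      _ = Anp1 l k a := by
          simp_rw [hcross]
          simp [hc]
  have hAsym : ∀ l ∈ ({i, j} : Set (Fin d)), ∀ (k a : Fin rn),
      Anp1 l k a = Anp1 l a k := by
    intro l hl k a
    rw [← hAval l hl k a, ← hAval l hl a k]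
    refine integral_congr_ae (Filter.Eventually.of_forall fun x => ?_)
    dsimp only
    ring
  have key : ∀ (k m : Fin rn), (∑ u, c i k u * c j m u) = ∑ u, c j k u * c i m u := by
    intro k m
    have h1 : ∫ x, (x i * pn k x) * (x j * pn m x) ∂μ = ∑ u, c i k u * c j m u := by
      calc ∫ x, (x i * pn k x) * (x j * pn m x) ∂μ
          = ∫ x, (∑ u, c i k u * P u x) * (∑ v, c j m v * P v x) ∂μ := by
            refine integral_congr_ae (Filter.Eventually.of_forall fun x => ?_)
            dsimp only
            rw [← hexp i hi x k, ← hexp j hj x m]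
        _ = ∑ u, ∑ v, c i k u * c j m v * ∫ x, P u x * P v x ∂μ :=
            integral_sum_mul_sum P P (c i k) (c j m) hPint
        _ = ∑ u, c i k u * c j m u := by
            simp_rw [hPon]
            simp
    have h2 : ∫ x, (x j * pn k x) * (x i * pn m x) ∂μ = ∑ u, c j k u * c i m u := by
      calc ∫ x, (x j * pn k x) * (x i * pn m x) ∂μ
          = ∫ x, (∑ u, c j k u * P u x) * (∑ v, c i m v * P v x) ∂μ := by
            refine integral_congr_ae (Filter.Eventually.of_forall fun x => ?_)
            dsimp only
            rw [← hexp j hj x k, ← hexp i hi x m]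
        _ = ∑ u, ∑ v, c j k u * c i m v * ∫ x, P u x * P v x ∂μ :=
            integral_sum_mul_sum P P (c j k) (c i m) hPint
        _ = ∑ u, c j k u * c i m u := by
            simp_rw [hPon]
            simp
    rw [← h1, ← h2]
    refine integral_congr_ae (Filter.Eventually.of_forall fun x => ?_)
    dsimp only
    ring
  ext k m
  have K := key k m
  simp only [hc, Fintype.sum_sum_type, Sum.elim_inl, Sum.elim_inr] at K
  have e1 : (∑ a, Anp1 i k a * Anp1 j m a) = ∑ a, Anp1 i k a * Anp1 j a m :=
    Finset.sum_congr rfl fun a _ => by rw [hAsym j hj a m]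
  have e2 : (∑ a, Anp1 j k a * Anp1 i m a) = ∑ a, Anp1 j k a * Anp1 i a m :=
    Finset.sum_congr rfl fun a _ => by rw [hAsym i hi a m]
  rw [e1, e2] at K
  simp only [Matrix.add_apply, Matrix.mul_apply, Matrix.transpose_apply]
  linarith [K]
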